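/- Let K ≥ 1, let λ_1,…,λ_K and c_1,…,c_K be real numbers, and define φ(x) := Σ_{r=1}^K c_r e^{λ_r x}. Then for every x ∈ ℝ, det( φ^{(i+j−2)}(x) )_{i,j=1,…,K} = ( ∏_{1≤j<i≤K} (λ_i − λ_j)^2 ) · ∏_{r=1}^K c_r e^{λ_r x}. (This expresses the multi-soliton Wronskian tau-function W_K[φ, φ′, …, φ^{(K−1)}] of the generalized Burgers–Hopf hierarchy in product form.) -/

import Mathlib

theorem stmt8 (K : ℕ) (hK : 1 ≤ K) (lam c : Fin K → ℝ)
    (φ : ℝ → ℝ) (hφ : ∀ x, φ x = ∑ r : Fin K, c r * Real.exp (lam r * x)) :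
    ∀ x : ℝ,
      Matrix.det (Matrix.of fun i j : Fin K =>
        iteratedDeriv ((i : ℕ) + (j : ℕ)) φ x) =
      (∏ i : Fin K, ∏ j ∈ Finset.Ioi i, (lam j - lam i) ^ 2) *
        ∏ r : Fin K, c r * Real.exp (lam r * x) := by
  have key : ∀ (n : ℕ) (x : ℝ),
      iteratedDeriv n φ x = ∑ r : Fin K, c r * lam r ^ n * Real.exp (lam r * x) := by
    intro n
    induction n with
    | zero => intro x; simp [iteratedDeriv_zero, hφ x]
    | succ n ih =>
      intro x
      rw [iteratedDeriv_succ]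
      have h1 : iteratedDeriv n φ =
          fun y => ∑ r : Fin K, c r * lam r ^ n * Real.exp (lam r * y) := funext ih
      rw [h1]
      have hd : HasDerivAt (fun y => ∑ r : Fin K, c r * lam r ^ n * Real.exp (lam r * y))
          (∑ r : Fin K, c r * lam r ^ (n + 1) * Real.exp (lam r * x)) x := by
        apply HasDerivAt.fun_sum
        intro r _
        have h2 : HasDerivAt (fun y => lam r * y) (lam r) x := by
          simpa using (hasDerivAt_id x).const_mul (lam r)
        have h3 : HasDerivAt (fun y => Real.exp (lam r * y))
            (Real.exp (lam r * x) * lam r) x := (Real.hasDerivAt_exp (lam r * x)).comp x h2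
        have h4 := h3.const_mul (c r * lam r ^ n)
        convert h4 using 1
        · rfl
        ring
      rw [hd.deriv]
  intro x
  have hM : (Matrix.of fun i j : Fin K => iteratedDeriv ((i : ℕ) + (j : ℕ)) φ x) =
      (Matrix.vandermonde lam).transpose *
        (Matrix.diagonal fun r => c r * Real.exp (lam r * x)) * (Matrix.vandermonde lam) := by
    ext i j
    rw [Matrix.mul_apply]
    simp only [Matrix.mul_diagonal, Matrix.transpose_apply, Matrix.vandermonde_apply,
      Matrix.of_apply, key]
    apply Finset.sum_congr rfl
    intro r _
    rw [pow_add]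
    ring
  rw [hM, Matrix.det_mul, Matrix.det_mul, Matrix.det_transpose, Matrix.det_vandermonde,
    Matrix.det_diagonal]
  have hv : (∏ i : Fin K, ∏ j ∈ Finset.Ioi i, (lam j - lam i)) *
      (∏ i : Fin K, ∏ j ∈ Finset.Ioi i, (lam j - lam i)) =
      ∏ i : Fin K, ∏ j ∈ Finset.Ioi i, (lam j - lam i) ^ 2 := by
    rw [← Finset.prod_mul_distrib]
    exact Finset.prod_congr rfl fun i _ => by
      rw [← Finset.prod_mul_distrib]
      exact Finset.prod_congr rfl fun j _ => (sq _).symm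
  rw [← hv]; ring
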